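/- A nonzero real homogeneous quartic f satisfies q(f) = 0 if and only if either f has a real linear factor of multiplicity at least 3, or f = cL₁L₂Q where L₁, L₂ are non-proportional real linear forms, Q = (X−zY)(X−z̄Y) with z = |z|e^{iθ} in the upper half-plane, and, after moving the roots of L₁, L₂ to 0 and ∞ by a real Möbius transformation, cos²θ = 3/4. -/

import Mathlib

/-- Coefficient convention: `a 0, a 1, a 2, a 3, a 4` are the coefficients of
`X⁴, X³Y, X²Y², XY³, Y⁴` respectively (so `a 0 = a₄, …, a 4 = a₀` in the paper's notation). -/
noncomputable def qq (a : Fin 5 → ℝ) : ℝ := 2 * a 0 * a 4 - (1/2) * a 3 * a 1 + (1/6) * (a 2)^2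

/-- The polarization of `qq`. -/
noncomputable def bb (f g : Fin 5 → ℝ) : ℝ := (1/2) * (qq (f + g) - qq f - qq g)

/-- Evaluation of the quartic with coefficient vector `a` at `(x, y)`. -/
noncomputable def ev (a : Fin 5 → ℝ) (x y : ℝ) : ℝ :=
  a 0 * x^4 + a 1 * x^3 * y + a 2 * x^2 * y^2 + a 3 * x * y^3 + a 4 * y^4

set_option maxHeartbeats 1600000

/-- Coefficient uniqueness for quartic forms. -/
lemma ext5 {c0 c1 c2 c3 c4 d0 d1 d2 d3 d4 : ℝ}
    (h : ∀ x y : ℝ, c0*x^4 + c1*x^3*y + c2*x^2*y^2 + c3*x*y^3 + c4*y^4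
        = d0*x^4 + d1*x^3*y + d2*x^2*y^2 + d3*x*y^3 + d4*y^4) :
    c0 = d0 ∧ c1 = d1 ∧ c2 = d2 ∧ c3 = d3 ∧ c4 = d4 := by
  have h1 := h 1 0
  have h2 := h 0 1
  have h3 := h 1 1
  have h4 := h 1 (-1)
  have h5 := h 2 1
  norm_num at h1 h2 h3 h4 h5
  refine ⟨by linarith, by linarith, by linarith, by linarith, by linarith⟩

/-- Coefficients of the transformed quartic. -/
lemma trc (a : Fin 5 → ℝ) (P Q R S : ℝ) (x y : ℝ) :
    ev a (P*x+Q*y) (R*x+S*y) =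
      (P*R^3*(a 3) + P^2*R^2*(a 2) + P^3*R*(a 1) + P^4*(a 0) + R^4*(a 4))*x^4
    + (2*P*Q*R^2*(a 2) + 3*P*R^2*S*(a 3) + 3*P^2*Q*R*(a 1) + 2*P^2*R*S*(a 2) + 4*P^3*Q*(a 0) + P^3*S*(a 1) + Q*R^3*(a 3) + 4*R^3*S*(a 4))*x^3*y
    + (4*P*Q*R*S*(a 2) + 3*P*Q^2*R*(a 1) + 3*P*R*S^2*(a 3) + 3*P^2*Q*S*(a 1) + 6*P^2*Q^2*(a 0) + P^2*S^2*(a 2) + 3*Q*R^2*S*(a 3) + Q^2*R^2*(a 2) + 6*R^2*S^2*(a 4))*x^2*y^2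
    + (2*P*Q*S^2*(a 2) + 3*P*Q^2*S*(a 1) + 4*P*Q^3*(a 0) + P*S^3*(a 3) + 3*Q*R*S^2*(a 3) + 2*Q^2*R*S*(a 2) + Q^3*R*(a 1) + 4*R*S^3*(a 4))*x*y^3
    + (Q*S^3*(a 3) + Q^2*S^2*(a 2) + Q^3*S*(a 1) + Q^4*(a 0) + S^4*(a 4))*y^4 := by
  simp only [ev]; ring

/-- qq of the transformed coefficients. -/
lemma qq_inv (a : Fin 5 → ℝ) (P Q R S : ℝ) :
    2*((P*R^3*(a 3) + P^2*R^2*(a 2) + P^3*R*(a 1) + P^4*(a 0) + R^4*(a 4)))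
      *((Q*S^3*(a 3) + Q^2*S^2*(a 2) + Q^3*S*(a 1) + Q^4*(a 0) + S^4*(a 4)))
    - (1/2)*((2*P*Q*S^2*(a 2) + 3*P*Q^2*S*(a 1) + 4*P*Q^3*(a 0) + P*S^3*(a 3) + 3*Q*R*S^2*(a 3) + 2*Q^2*R*S*(a 2) + Q^3*R*(a 1) + 4*R*S^3*(a 4)))
      *((2*P*Q*R^2*(a 2) + 3*P*R^2*S*(a 3) + 3*P^2*Q*R*(a 1) + 2*P^2*R*S*(a 2) + 4*P^3*Q*(a 0) + P^3*S*(a 1) + Q*R^3*(a 3) + 4*R^3*S*(a 4)))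
    + (1/6)*((4*P*Q*R*S*(a 2) + 3*P*Q^2*R*(a 1) + 3*P*R*S^2*(a 3) + 3*P^2*Q*S*(a 1) + 6*P^2*Q^2*(a 0) + P^2*S^2*(a 2) + 3*Q*R^2*S*(a 3) + Q^2*R^2*(a 2) + 6*R^2*S^2*(a 4)))^2
    = (P*S-Q*R)^4 * qq a := by
  simp only [qq]; ring

/-- Combined: from a universal identity giving the transformed form in coefficient shape,
and det = 1, deduce the qq relation on the new coefficients. -/
lemma qq_transfer (a : Fin 5 → ℝ) (P Q R S c0 c1 c2 c3 c4 : ℝ)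
    (hdet : P*S - Q*R = 1)
    (h : ∀ x y : ℝ, ev a (P*x+Q*y) (R*x+S*y)
        = c0*x^4 + c1*x^3*y + c2*x^2*y^2 + c3*x*y^3 + c4*y^4) :
    2*c0*c4 - (1/2)*c3*c1 + (1/6)*c2^2 = qq a := by
  have h' : ∀ x y : ℝ,
      (P*R^3*(a 3) + P^2*R^2*(a 2) + P^3*R*(a 1) + P^4*(a 0) + R^4*(a 4))*x^4
    + (2*P*Q*R^2*(a 2) + 3*P*R^2*S*(a 3) + 3*P^2*Q*R*(a 1) + 2*P^2*R*S*(a 2) + 4*P^3*Q*(a 0) + P^3*S*(a 1) + Q*R^3*(a 3) + 4*R^3*S*(a 4))*x^3*y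
    + (4*P*Q*R*S*(a 2) + 3*P*Q^2*R*(a 1) + 3*P*R*S^2*(a 3) + 3*P^2*Q*S*(a 1) + 6*P^2*Q^2*(a 0) + P^2*S^2*(a 2) + 3*Q*R^2*S*(a 3) + Q^2*R^2*(a 2) + 6*R^2*S^2*(a 4))*x^2*y^2
    + (2*P*Q*S^2*(a 2) + 3*P*Q^2*S*(a 1) + 4*P*Q^3*(a 0) + P*S^3*(a 3) + 3*Q*R*S^2*(a 3) + 2*Q^2*R*S*(a 2) + Q^3*R*(a 1) + 4*R*S^3*(a 4))*x*y^3
    + (Q*S^3*(a 3) + Q^2*S^2*(a 2) + Q^3*S*(a 1) + Q^4*(a 0) + S^4*(a 4))*y^4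
      = c0*x^4 + c1*x^3*y + c2*x^2*y^2 + c3*x*y^3 + c4*y^4 := by
    intro x y; rw [← trc a P Q R S x y]; exact h x y
  obtain ⟨e0, e1, e2, e3, e4⟩ := ext5 h'
  rw [← e0, ← e1, ← e2, ← e3, ← e4]
  rw [qq_inv a P Q R S, hdet]
  ring


/-- Every depressed monic real quartic x⁴ + Px² + Qx + R factors as
(x²+Tx+U)(x²-Tx+V). Stated as coefficient identities. -/
lemma factor0 (P Q R : ℝ) : ∃ T U V : ℝ,
    P = U + V - T^2 ∧ Q = T*(V-U) ∧ R = U*V := by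
  -- resolvent cubic s³ + 2Ps² + (P²-4R)s - Q² has a nonneg root
  set f : ℝ → ℝ := fun s => s^3 + 2*P*s^2 + (P^2-4*R)*s - Q^2 with hf
  have hM : ∃ s : ℝ, 0 ≤ s ∧ f s = 0 := by
    set M : ℝ := 1 + |2*P| + |P^2-4*R| + Q^2 with hMdef
    have hM1 : (1:ℝ) ≤ M := by simp only [hMdef]; nlinarith [abs_nonneg (2*P), abs_nonneg (P^2-4*R), sq_nonneg Q]
    have hMP : |2*P| ≤ M := by
      have := abs_nonneg (P^2-4*R); have := sq_nonneg Q; simp only [hMdef]; nlinarith [abs_nonneg (2*P)]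
    have hfM : 0 ≤ f M := by
      have h1 : -(|2*P|) ≤ 2*P := neg_abs_le _
      have h2 : -(|P^2-4*R|) ≤ P^2-4*R := neg_abs_le _
      have h3 : (0:ℝ) ≤ |2*P| := abs_nonneg _
      have h4 : (0:ℝ) ≤ |P^2-4*R| := abs_nonneg _
      have h5 : (0:ℝ) ≤ Q^2 := sq_nonneg _
      simp only [hf]
      nlinarith [sq_nonneg M, mul_le_mul_of_nonneg_left h1 (by nlinarith : (0:ℝ) ≤ M^2),
        mul_le_mul_of_nonneg_left h2 (by nlinarith : (0:ℝ) ≤ M)]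
    have hf0 : f 0 ≤ 0 := by simp [hf]; positivity
    have hcont : ContinuousOn f (Set.Icc 0 M) := by fun_prop
    have h0M : (0:ℝ) ≤ M := by linarith
    have := intermediate_value_Icc h0M hcont
    have hmem : (0:ℝ) ∈ Set.Icc (f 0) (f M) := ⟨hf0, hfM⟩
    obtain ⟨s, hs, hfs⟩ := this hmem
    exact ⟨s, hs.1, hfs⟩
  obtain ⟨s, hs0, hfs⟩ := hM
  rcases eq_or_lt_of_le hs0 with hs | hs
  · -- s = 0 : then Q = 0, biquadratic case
    have hQ : Q = 0 := by
      have : -Q^2 = 0 := by simpa [hf, ← hs] using hfs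
      nlinarith [sq_nonneg Q]
    rcases le_or_gt (P^2-4*R) 0 with hD | hD
    · -- P² - 4R ≤ 0 : R ≥ P²/4 ≥ 0
      have hR : 0 ≤ R := by nlinarith [sq_nonneg P]
      have hRP : P ≤ 2*Real.sqrt R := by
        nlinarith [Real.sq_sqrt hR, Real.sqrt_nonneg R, sq_nonneg (P - 2*Real.sqrt R),
          sq_nonneg (P + 2*Real.sqrt R)]
      refine ⟨Real.sqrt (2*Real.sqrt R - P), Real.sqrt R, Real.sqrt R, ?_, ?_, ?_⟩
      · rw [Real.sq_sqrt (by linarith)]; ring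
      · rw [hQ]; ring
      · exact (Real.mul_self_sqrt hR).symm
    · -- P² - 4R > 0 : (x²+U)(x²+V)
      refine ⟨0, (P - Real.sqrt (P^2-4*R))/2, (P + Real.sqrt (P^2-4*R))/2, by ring, by rw [hQ]; ring, ?_⟩
      have := Real.sq_sqrt hD.le
      nlinarith
  · -- s > 0
    have hsne : s ≠ 0 := ne_of_gt hs
    refine ⟨Real.sqrt s, (P + s - Q/Real.sqrt s)/2, (P + s + Q/Real.sqrt s)/2, ?_, ?_, ?_⟩
    · rw [Real.sq_sqrt hs0]; ring
    · have h1 : Real.sqrt s ≠ 0 := by positivity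
      field_simp
      ring
    · have h1 : Real.sqrt s ≠ 0 := by positivity
      have h2 : Real.sqrt s * Real.sqrt s = s := Real.mul_self_sqrt hs0
      have hkey : Q^2 = s^3 + 2*P*s^2 + (P^2-4*R)*s := by
        simp only [hf] at hfs; linarith
      field_simp
      nlinarith [hkey]


lemma triple_of (r1 r2 r3 r4 : ℝ) (h1 : r1 = r2 ∨ r3 = r4) (h2 : r1 = r3 ∨ r2 = r4)
    (h3 : r1 = r4 ∨ r2 = r3) :
    ∃ ρ ρ' : ℝ, ∀ x y : ℝ,
      (x-r1*y)*(x-r2*y)*((x-r3*y)*(x-r4*y)) = (x-ρ*y)^3*(x-ρ'*y) := by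
  rcases h1 with h1|h1
  · rcases h2 with h2|h2
    · exact ⟨r1, r4, fun x y => by rw [← h1, ← h2]; ring⟩
    · exact ⟨r1, r3, fun x y => by rw [← h2, ← h1]; ring⟩
  · rcases h3 with h3|h3
    · exact ⟨r4, r2, fun x y => by rw [h1, h3]; ring⟩
    · exact ⟨r3, r1, fun x y => by rw [← h1, h3]; ring⟩


lemma quad_roots (T U : ℝ) (h : 0 ≤ T^2 - 4*U) :
    ∃ r1 r2 : ℝ, r2 ≤ r1 ∧ r1 + r2 = -T ∧ r1*r2 = U := by
  refine ⟨(-T + Real.sqrt (T^2-4*U))/2, (-T - Real.sqrt (T^2-4*U))/2, ?_, by ring, ?_⟩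
  · nlinarith [Real.sqrt_nonneg (T^2-4*U)]
  · nlinarith [Real.sq_sqrt h]


/-- The main classification core: the quartic (after an SL2 move) is
k(x²+Txy+Uy²)(x²-Txy+Vy²) with the first factor splitting over ℝ. -/
lemma main_core (a : Fin 5 → ℝ) (P Q R S k T U V : ℝ) (hdet : P*S - Q*R = 1) (hk : k ≠ 0)
    (hcon : 12*U*V + (U+V-T^2)^2 = 0)
    (H : ∀ x y : ℝ, ev a (P*x+Q*y) (R*x+S*y) = k*((x^2+T*x*y+U*y^2)*(x^2-T*x*y+V*y^2)))
    (hsplit : 0 ≤ T^2 - 4*U) :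
    (∃ s t s' t' : ℝ, (s, t) ≠ (0, 0) ∧
        ∀ x y : ℝ, ev a x y = (s * x + t * y)^3 * (s' * x + t' * y)) ∨
    (∃ (g : Matrix.SpecialLinearGroup (Fin 2) ℝ) (c m θ : ℝ),
        c ≠ 0 ∧ 0 < m ∧ 0 < θ ∧ θ < Real.pi ∧ (Real.cos θ)^2 = 3/4 ∧
        ∀ x y : ℝ,
          ev a ((g : Matrix (Fin 2) (Fin 2) ℝ) 0 0 * x
                  + (g : Matrix (Fin 2) (Fin 2) ℝ) 0 1 * y)
               ((g : Matrix (Fin 2) (Fin 2) ℝ) 1 0 * x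
                  + (g : Matrix (Fin 2) (Fin 2) ℝ) 1 1 * y) =
            c * (x * y * (x^2 - 2 * m * Real.cos θ * x * y + m^2 * y^2))) := by
  obtain ⟨r1, r2, hle, hsum, hprod⟩ := quad_roots T U hsplit
  have hT : T = -(r1+r2) := by linarith
  subst hT
  have hU : U = r1*r2 := hprod.symm
  subst hU
  rcases le_or_gt 0 ((r1+r2)^2 - 4*V) with hs2 | hs2
  · -- all roots real: triple root case
    obtain ⟨r3, r4, hle34, hsum34, hprod34⟩ := quad_roots (r1+r2) V hs2
    have hV : V = r3*r4 := hprod34.symm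
    subst hV
    have h4 : r4 = -(r1+r2)-r3 := by linarith
    subst h4
    have hS : ((r1-r2)*(r3-(-(r1+r2)-r3)))^2 + ((r1-r3)*(r2-(-(r1+r2)-r3)))^2
        + ((r1-(-(r1+r2)-r3))*(r2-r3))^2 = 0 := by linear_combination 2*hcon
    have e1 : (r1-r2)*(r3-(-(r1+r2)-r3)) = 0 := by
      nlinarith [sq_nonneg ((r1-r3)*(r2-(-(r1+r2)-r3))), sq_nonneg ((r1-(-(r1+r2)-r3))*(r2-r3)),
        sq_nonneg ((r1-r2)*(r3-(-(r1+r2)-r3)))]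
    have e2 : (r1-r3)*(r2-(-(r1+r2)-r3)) = 0 := by
      nlinarith [sq_nonneg ((r1-r2)*(r3-(-(r1+r2)-r3))), sq_nonneg ((r1-(-(r1+r2)-r3))*(r2-r3)),
        sq_nonneg ((r1-r3)*(r2-(-(r1+r2)-r3)))]
    have e3 : (r1-(-(r1+r2)-r3))*(r2-r3) = 0 := by
      nlinarith [sq_nonneg ((r1-r2)*(r3-(-(r1+r2)-r3))), sq_nonneg ((r1-r3)*(r2-(-(r1+r2)-r3))),
        sq_nonneg ((r1-(-(r1+r2)-r3))*(r2-r3))]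
    have h1 : r1 = r2 ∨ r3 = (-(r1+r2)-r3) := by
      rcases mul_eq_zero.mp e1 with h | h
      · exact Or.inl (by linarith)
      · exact Or.inr (by linarith)
    have h2 : r1 = r3 ∨ r2 = (-(r1+r2)-r3) := by
      rcases mul_eq_zero.mp e2 with h | h
      · exact Or.inl (by linarith)
      · exact Or.inr (by linarith)
    have h3 : r1 = (-(r1+r2)-r3) ∨ r2 = r3 := by
      rcases mul_eq_zero.mp e3 with h | h
      · exact Or.inl (by linarith)
      · exact Or.inr (by linarith)
    obtain ⟨ρ, ρ', htr⟩ := triple_of r1 r2 r3 (-(r1+r2)-r3) h1 h2 h3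
    left
    refine ⟨S + ρ*R, -(Q + ρ*P), k*(S + ρ'*R), -(k*(Q + ρ'*P)), ?_, ?_⟩
    · intro hzz
      rw [Prod.mk.injEq] at hzz
      obtain ⟨hz1, hz2⟩ := hzz
      have : P*S - Q*R = 0 := by linear_combination P*hz1 + R*hz2
      rw [this] at hdet; norm_num at hdet
    · intro x y
      have h0 := H (S*x - Q*y) (-(R*x) + P*y)
      rw [show P*(S*x - Q*y) + Q*(-(R*x) + P*y) = x from by linear_combination x*hdet,
        show R*(S*x - Q*y) + S*(-(R*x) + P*y) = y from by linear_combination y*hdet] at h0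
      rw [h0]
      have hfac : ∀ X Y : ℝ,
          (X^2 + -(r1+r2)*X*Y + r1*r2*Y^2)*(X^2 - -(r1+r2)*X*Y + (r3*(-(r1+r2)-r3))*Y^2)
          = (X-r1*Y)*(X-r2*Y)*((X-r3*Y)*(X-(-(r1+r2)-r3)*Y)) := by intro X Y; ring
      rw [hfac, htr]
      ring
  · -- complex pair case
    right
    have hne : r2 < r1 := by
      rcases eq_or_lt_of_le hle with h | h
      · exfalso; rw [h] at hcon hs2; nlinarith [sq_nonneg r1, sq_nonneg (V - 3*r1^2)]
      · exact h
    have hδ : (0:ℝ) < r1 - r2 := by linarith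
    have hA0 : (0:ℝ) < 2*r1^2 + r1*r2 + V := by nlinarith [sq_nonneg (3*r1+r2)]
    have hC0 : (0:ℝ) < 2*r2^2 + r1*r2 + V := by nlinarith [sq_nonneg (r1+3*r2)]
    have hdisc : (2*r1*r2 + (r1+r2)^2 + 2*V)^2
        < 4*((2*r1^2 + r1*r2 + V)*(2*r2^2 + r1*r2 + V)) := by
      nlinarith [mul_pos (mul_pos hδ hδ) (by nlinarith : (0:ℝ) < 4*V - (r1+r2)^2)]
    have hB3 : (2*r1*r2 + (r1+r2)^2 + 2*V)^2
        = 3*((2*r1^2 + r1*r2 + V)*(2*r2^2 + r1*r2 + V)) := by linear_combination hcon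
    set A0 := 2*r1^2 + r1*r2 + V with hA0def
    set B0 := 2*r1*r2 + (r1+r2)^2 + 2*V with hB0def
    set C0 := 2*r2^2 + r1*r2 + V with hC0def
    set δ := r1 - r2 with hδdef
    set m : ℝ := Real.sqrt (C0/A0)/δ with hmdef
    have hm : 0 < m := div_pos (Real.sqrt_pos.mpr (div_pos hC0 hA0)) hδ
    have hδm : δ*m = Real.sqrt (C0/A0) := by rw [hmdef]; field_simp
    have hm2 : A0*(δ*m)^2 = C0 := by
      rw [hδm, Real.sq_sqrt (le_of_lt (div_pos hC0 hA0))]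
      field_simp
    set cv : ℝ := -B0/(2*A0*δ*m) with hcvdef
    have h2A : 0 < 2*A0*δ*m := by positivity
    have hsq : (2*A0*δ*m)^2 = 4*(A0*C0) := by linear_combination 4*A0*hm2
    have hb1 : -1 < cv := by
      rw [hcvdef, lt_div_iff₀ h2A]
      nlinarith [hsq, hdisc, sq_nonneg (2*A0*δ*m - B0), sq_nonneg (2*A0*δ*m + B0)]
    have hb2 : cv < 1 := by
      rw [hcvdef, div_lt_iff₀ h2A]
      nlinarith [hsq, hdisc, sq_nonneg (2*A0*δ*m - B0), sq_nonneg (2*A0*δ*m + B0)]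
    have hcoseq : Real.cos (Real.arccos cv) = cv := Real.cos_arccos (by linarith) (by linarith)
    have hm2' : m^2 = C0/(A0*δ^2) := by
      rw [eq_div_iff (by positivity)]
      linear_combination hm2
    have h2A : 0 < 2*A0*δ*m := by nlinarith [mul_pos (mul_pos hA0 hδ) hm]
    have hsq : (2*A0*δ*m)^2 = 4*(A0*C0) := by linear_combination 4*A0*hm2
    have hb1 : -1 < cv := by
      rw [hcvdef, lt_div_iff₀ h2A]
      nlinarith [hsq, hdisc, sq_nonneg (2*A0*δ*m - B0), sq_nonneg (2*A0*δ*m + B0)]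
    have hb2 : cv < 1 := by
      rw [hcvdef, div_lt_iff₀ h2A]
      nlinarith [hsq, hdisc, sq_nonneg (2*A0*δ*m - B0), sq_nonneg (2*A0*δ*m + B0)]
    have hcoseq : Real.cos (Real.arccos cv) = cv := Real.cos_arccos (by linarith) (by linarith)
    have hm2' : m^2 = C0/(A0*δ^2) := by
      rw [eq_div_iff (by positivity)]
      linear_combination hm2
    have hdetg : (P*r1+Q)*((R*r2+S)/δ) - ((P*r2+Q)/δ)*(R*r1+S) = 1 := by
      field_simp
      linear_combination (r1-r2)*hdet - hδdef
    have hdm : Matrix.det !![P*r1+Q, (P*r2+Q)/δ; R*r1+S, (R*r2+S)/δ] = 1 := by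
      rw [Matrix.det_fin_two_of]; linear_combination hdetg
    refine ⟨⟨!![P*r1+Q, (P*r2+Q)/δ; R*r1+S, (R*r2+S)/δ], hdm⟩, -(k*δ*A0), m, Real.arccos cv,
      ?_, hm, Real.arccos_pos.mpr hb2, (lt_of_le_of_ne (Real.arccos_le_pi cv) (fun hh => absurd (Real.arccos_eq_pi.mp hh) (by linarith))), ?_, ?_⟩
    · intro h
      rw [neg_eq_zero] at h
      rcases mul_eq_zero.mp h with h' | h'
      · rcases mul_eq_zero.mp h' with h'' | h''
        · exact hk h''
        · linarith
      · linarith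
    · rw [hcoseq, hcvdef, div_pow, div_eq_iff (by positivity)]
      linear_combination hB3 - (3/4)*hsq
    · intro x y
      have h0 := H (r1*x + r2*y/δ) (x + y/δ)
      rw [show P*(r1*x + r2*y/δ) + Q*(x + y/δ) = (P*r1+Q)*x + ((P*r2+Q)/δ)*y from by
            field_simp; ring,
          show R*(r1*x + r2*y/δ) + S*(x + y/δ) = (R*r1+S)*x + ((R*r2+S)/δ)*y from by
            field_simp; ring] at h0
      show ev a ((P*r1+Q)*x + ((P*r2+Q)/δ)*y) ((R*r1+S)*x + ((R*r2+S)/δ)*y) = _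
      rw [h0, hcoseq]
      have hmc : 2*m*cv = -(B0/(A0*δ)) := by
        rw [hcvdef]; field_simp
      rw [hmc, hm2']
      rw [hA0def, hB0def, hC0def, hδdef]
      have hδne : r1 - r2 ≠ 0 := by linarith
      have hAne : 2*r1^2 + r1*r2 + V ≠ 0 := by linarith
      have hAne' : r1 * (r1 * 2 + r2) + V ≠ 0 := by linarith
      field_simp
      ring

/-- A nonzero real quartic `f` satisfies `q(f) = 0` iff either `f = L³M` with `L ≠ 0` a real
linear form, or `f` has two distinct real roots and a conjugate pair of non-real roots
`z = m·e^{iθ}`, `z̄`, such that after moving the two real roots to `0` and `∞` by a real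
Möbius transformation (an element of SL(2,ℝ)) and rescaling, `f` becomes
`XY(X² − 2m cos θ·XY + m²Y²)` with `cos²θ = 3/4`. -/
theorem stmt_19 (a : Fin 5 → ℝ) (ha : a ≠ 0) :
    qq a = 0 ↔
      ((∃ s t s' t' : ℝ, (s, t) ≠ (0, 0) ∧
          ∀ x y : ℝ, ev a x y = (s * x + t * y)^3 * (s' * x + t' * y)) ∨
       (∃ (g : Matrix.SpecialLinearGroup (Fin 2) ℝ) (c m θ : ℝ),
          c ≠ 0 ∧ 0 < m ∧ 0 < θ ∧ θ < Real.pi ∧ (Real.cos θ)^2 = 3/4 ∧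
          ∀ x y : ℝ,
            ev a ((g : Matrix (Fin 2) (Fin 2) ℝ) 0 0 * x
                    + (g : Matrix (Fin 2) (Fin 2) ℝ) 0 1 * y)
                 ((g : Matrix (Fin 2) (Fin 2) ℝ) 1 0 * x
                    + (g : Matrix (Fin 2) (Fin 2) ℝ) 1 1 * y) =
              c * (x * y * (x^2 - 2 * m * Real.cos θ * x * y + m^2 * y^2)))) := by
  constructor
  · -- forward direction
    intro hq
    have hpt : ∃ x0 y0 : ℝ, ev a x0 y0 ≠ 0 := by
      by_contra hcon
      push_neg at hcon
      apply ha
      have h' : ∀ x y : ℝ, (a 0)*x^4 + (a 1)*x^3*y + (a 2)*x^2*y^2 + (a 3)*x*y^3 + (a 4)*y^4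
          = 0*x^4 + 0*x^3*y + 0*x^2*y^2 + 0*x*y^3 + 0*y^4 := by
        intro x y
        have h0 := hcon x y
        simp only [ev] at h0
        linarith
      obtain ⟨e0, e1, e2, e3, e4⟩ := ext5 h'
      norm_num at e0 e1 e2 e3 e4
      funext i
      simp only [Pi.zero_apply]
      fin_cases i <;> assumption
    obtain ⟨x0, y0, hpt⟩ := hpt
    have hn : (0:ℝ) < x0^2 + y0^2 := by
      rcases eq_or_ne x0 0 with hx | hx
      · rcases eq_or_ne y0 0 with hy | hy
        · exfalso; apply hpt; rw [hx, hy]; simp [ev]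
        · positivity
      · positivity
    have hn0 : x0^2 + y0^2 ≠ 0 := ne_of_gt hn
    obtain ⟨b0, b1, b2, b3, b4, H1⟩ : ∃ b0 b1 b2 b3 b4 : ℝ, ∀ x y : ℝ,
        ev a (x0*x + (-y0/(x0^2+y0^2))*y) (y0*x + (x0/(x0^2+y0^2))*y)
        = b0*x^4 + b1*x^3*y + b2*x^2*y^2 + b3*x*y^3 + b4*y^4 :=
      ⟨_, _, _, _, _, trc a x0 (-y0/(x0^2+y0^2)) y0 (x0/(x0^2+y0^2))⟩
    have hb0 : b0 ≠ 0 := by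
      have h10 := H1 1 0
      norm_num at h10
      intro hh
      apply hpt
      rw [h10, hh]
    set t0 : ℝ := -b1/(4*b0) with ht0def
    have ht0 : 4*b0*t0 + b1 = 0 := by rw [ht0def]; field_simp; ring
    have H2 : ∀ x y : ℝ,
        ev a (x0*x + (x0*t0 + -y0/(x0^2+y0^2))*y) (y0*x + (y0*t0 + x0/(x0^2+y0^2))*y)
        = b0*x^4 + 0*x^3*y + (6*b0*t0^2 + 3*b1*t0 + b2)*x^2*y^2
          + (4*b0*t0^3 + 3*b1*t0^2 + 2*b2*t0 + b3)*x*y^3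
          + (b0*t0^4 + b1*t0^3 + b2*t0^2 + b3*t0 + b4)*y^4 := by
      intro x y
      have h := H1 (x + t0*y) y
      rw [show x0*(x+t0*y) + (-y0/(x0^2+y0^2))*y = x0*x + (x0*t0 + -y0/(x0^2+y0^2))*y from by ring,
          show y0*(x+t0*y) + (x0/(x0^2+y0^2))*y = y0*x + (y0*t0 + x0/(x0^2+y0^2))*y from by ring] at h
      rw [h]
      linear_combination (x^3*y)*ht0
    have hdet1 : x0*(y0*t0 + x0/(x0^2+y0^2)) - (x0*t0 + -y0/(x0^2+y0^2))*y0 = 1 := by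
      field_simp; ring
    obtain ⟨T, U, V, hf1, hf2, hf3⟩ := factor0
      ((6*b0*t0^2 + 3*b1*t0 + b2)/b0) ((4*b0*t0^3 + 3*b1*t0^2 + 2*b2*t0 + b3)/b0)
      ((b0*t0^4 + b1*t0^3 + b2*t0^2 + b3*t0 + b4)/b0)
    rw [div_eq_iff hb0] at hf1 hf2 hf3
    have H3 : ∀ x y : ℝ,
        ev a (x0*x + (x0*t0 + -y0/(x0^2+y0^2))*y) (y0*x + (y0*t0 + x0/(x0^2+y0^2))*y)
        = b0*((x^2+T*x*y+U*y^2)*(x^2-T*x*y+V*y^2)) := by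
      intro x y
      rw [H2 x y]
      linear_combination (x^2*y^2)*hf1 + (x*y^3)*hf2 + (y^4)*hf3
    have H3' : ∀ x y : ℝ,
        ev a (x0*x + (x0*t0 + -y0/(x0^2+y0^2))*y) (y0*x + (y0*t0 + x0/(x0^2+y0^2))*y)
        = b0*x^4 + (0:ℝ)*x^3*y + ((U+V-T^2)*b0)*x^2*y^2 + ((T*(V-U))*b0)*x*y^3
          + ((U*V)*b0)*y^4 := fun x y => (H3 x y).trans (by ring)
    have hqt := qq_transfer a _ _ _ _ _ _ _ _ _ hdet1 H3'
    rw [hq] at hqt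
    have hcon : 12*U*V + (U+V-T^2)^2 = 0 := by
      have h6 : b0^2*(12*U*V + (U+V-T^2)^2) = 0 := by linear_combination 6*hqt
      rcases mul_eq_zero.mp h6 with h | h
      · exact absurd h (pow_ne_zero 2 hb0)
      · exact h
    rcases le_or_gt 0 (T^2-4*U) with hs | hs
    · exact main_core a x0 _ y0 _ b0 T U V hdet1 hb0 hcon H3 hs
    · rcases le_or_gt 0 (T^2-4*V) with hs' | hs'
      · have H3s : ∀ x y : ℝ,
            ev a (x0*x + (x0*t0 + -y0/(x0^2+y0^2))*y) (y0*x + (y0*t0 + x0/(x0^2+y0^2))*y)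
            = b0*((x^2+(-T)*x*y+V*y^2)*(x^2-(-T)*x*y+U*y^2)) :=
          fun x y => (H3 x y).trans (by ring)
        have hcon' : 12*V*U + (V+U-(-T)^2)^2 = 0 := by linear_combination hcon
        have hs'' : 0 ≤ (-T)^2 - 4*V := by nlinarith
        exact main_core a x0 _ y0 _ b0 (-T) V U hdet1 hb0 hcon' H3s hs''
      · exfalso
        nlinarith [hcon, sq_nonneg T, sq_nonneg (U+V-T^2)]
  · -- backward direction
    rintro (⟨s, t, s', t', hst, h⟩ | ⟨g, c, m, θ, hc, hm, hθ0, hθπ, hcos, h⟩)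
    · have h' : ∀ x y : ℝ, ev a (1*x+0*y) (0*x+1*y)
          = (s^3*s')*x^4 + (3*s^2*t*s' + s^3*t')*x^3*y + (3*s*t^2*s' + 3*s^2*t*t')*x^2*y^2
            + (t^3*s' + 3*s*t^2*t')*x*y^3 + (t^3*t')*y^4 := by
        intro x y
        rw [show (1:ℝ)*x+0*y = x from by ring, show (0:ℝ)*x+1*y = y from by ring, h x y]
        ring
      have hqt := qq_transfer a 1 0 0 1 _ _ _ _ _ (by norm_num) h'
      rw [← hqt]
      ring
    · have hdet : (g : Matrix (Fin 2) (Fin 2) ℝ) 0 0 * (g : Matrix (Fin 2) (Fin 2) ℝ) 1 1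
          - (g : Matrix (Fin 2) (Fin 2) ℝ) 0 1 * (g : Matrix (Fin 2) (Fin 2) ℝ) 1 0 = 1 := by
        have hp := g.prop
        rw [Matrix.det_fin_two] at hp
        linarith
      have h' : ∀ x y : ℝ,
          ev a ((g : Matrix (Fin 2) (Fin 2) ℝ) 0 0 * x + (g : Matrix (Fin 2) (Fin 2) ℝ) 0 1 * y)
               ((g : Matrix (Fin 2) (Fin 2) ℝ) 1 0 * x + (g : Matrix (Fin 2) (Fin 2) ℝ) 1 1 * y)
          = 0*x^4 + c*x^3*y + (-(2*c*m*Real.cos θ))*x^2*y^2 + (c*m^2)*x*y^3 + 0*y^4 := by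
        intro x y
        rw [h x y]
        ring
      have hqt := qq_transfer a _ _ _ _ _ _ _ _ _ hdet h'
      rw [← hqt]
      linear_combination (2/3)*c^2*m^2*hcos
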